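/- For every y ∈ M, the function x ↦ h(y,x) is a solution of the critical equation u = T(u), and the function x ↦ −h(x,y) is a continuous subsolution; moreover the family (−h(·,y))_{y∈M} is uniformly bounded. -/

import Mathlib

open Filter

/-- The minimal cost over chains of length `n` from `x` to `y`. -/
noncomputable def minChainCost {M : Type*} (c : M × M → ℝ) (n : ℕ) (x y : M) : ℝ :=
  sInf {r : ℝ | ∃ p : ℕ → M, p 0 = x ∧ p n = y ∧
    r = ∑ i ∈ Finset.range n, c (p i, p (i + 1))}

/-- The Peierls barrier `h(x, y) = liminf_n c_n(x, y)` (critical value `0`). -/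
noncomputable def peierls {M : Type*} (c : M × M → ℝ) (x y : M) : ℝ :=
  Filter.liminf (fun n => minChainCost c n x y) Filter.atTop

namespace PeierlsAux

/-- The set of chain costs. -/
def S {M : Type*} (c : M × M → ℝ) (n : ℕ) (x y : M) : Set ℝ :=
  {r : ℝ | ∃ p : ℕ → M, p 0 = x ∧ p n = y ∧
    r = ∑ i ∈ Finset.range n, c (p i, p (i + 1))}

variable {M : Type*} {c : M × M → ℝ}

lemma minChainCost_eq (c : M × M → ℝ) (n : ℕ) (x y : M) :
    minChainCost c n x y = sInf (S c n x y) := rfl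

lemma S_nonempty {n : ℕ} (hn : 1 ≤ n) (x y : M) : (S c n x y).Nonempty := by
  classical
  exact ⟨_, fun i => if i = 0 then x else y, if_pos rfl, if_neg (by omega), rfl⟩

lemma S_lb {v : M → ℝ} (hv : ∀ z x : M, v x ≤ v z + c (z, x)) (n : ℕ) (x y : M) :
    ∀ r ∈ S c n x y, v y - v x ≤ r := by
  rintro r ⟨p, h0, hn, rfl⟩
  have key : ∀ i ∈ Finset.range n, v (p (i + 1)) - v (p i) ≤ c (p i, p (i + 1)) := by
    intro i _
    have := hv (p i) (p (i + 1)); linarith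
  calc v y - v x = ∑ i ∈ Finset.range n, (v (p (i + 1)) - v (p i)) := by
        rw [Finset.sum_range_sub (fun i => v (p i)), h0, hn]
    _ ≤ _ := Finset.sum_le_sum key

/-- Prepend one step `z → x` to chains from `x` to `y`. -/
lemma prepend_le {n : ℕ} (hbd : ∀ n (x y : M), BddBelow (S c n x y)) (hn : 1 ≤ n)
    (z x y : M) :
    minChainCost c (n + 1) z y ≤ c (z, x) + minChainCost c n x y := by
  classical
  rw [minChainCost_eq, minChainCost_eq]
  have key : ∀ r ∈ S c n x y, sInf (S c (n + 1) z y) - c (z, x) ≤ r := by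
    rintro r ⟨p, h0, hlast, rfl⟩
    set p' : ℕ → M := fun i => if i = 0 then z else p (i - 1) with hp'
    have hmem : (∑ i ∈ Finset.range (n + 1), c (p' i, p' (i + 1))) ∈ S c (n + 1) z y :=
      ⟨p', if_pos rfl, by simp [p', hlast], rfl⟩
    have hsum : ∑ i ∈ Finset.range (n + 1), c (p' i, p' (i + 1))
        = c (z, x) + ∑ i ∈ Finset.range n, c (p i, p (i + 1)) := by
      rw [Finset.sum_range_succ']
      have e1 : ∀ i ∈ Finset.range n, c (p' (i + 1), p' (i + 1 + 1)) = c (p i, p (i + 1)) := by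
        intro i _; simp [p']
      rw [Finset.sum_congr rfl e1]
      have e0 : c (p' 0, p' 1) = c (z, x) := by simp [p', h0]
      rw [e0, add_comm]
    have := csInf_le (hbd _ _ _) hmem
    rw [hsum] at this; linarith
  have := le_csInf (S_nonempty hn x y) key
  linarith

/-- Append one step `z → x` to chains from `y` to `z`. -/
lemma append_le {n : ℕ} (hbd : ∀ n (x y : M), BddBelow (S c n x y)) (hn : 1 ≤ n)
    (y z x : M) :
    minChainCost c (n + 1) y x ≤ minChainCost c n y z + c (z, x) := by
  classical
  rw [minChainCost_eq, minChainCost_eq]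
  have key : ∀ r ∈ S c n y z, sInf (S c (n + 1) y x) - c (z, x) ≤ r := by
    rintro r ⟨p, h0, hlast, rfl⟩
    set p' : ℕ → M := fun i => if i = n + 1 then x else p i with hp'
    have hmem : (∑ i ∈ Finset.range (n + 1), c (p' i, p' (i + 1))) ∈ S c (n + 1) y x :=
      ⟨p', by simp [p', h0], if_pos rfl, rfl⟩
    have hsum : ∑ i ∈ Finset.range (n + 1), c (p' i, p' (i + 1))
        = (∑ i ∈ Finset.range n, c (p i, p (i + 1))) + c (z, x) := by
      rw [Finset.sum_range_succ]
      have e1 : ∀ i ∈ Finset.range n, c (p' i, p' (i + 1)) = c (p i, p (i + 1)) := by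
        intro i hi
        have hi' := Finset.mem_range.mp hi
        have h1 : i ≠ n + 1 := by omega
        have h2 : i + 1 ≠ n + 1 := by omega
        simp [p', h1, h2, show i ≠ n by omega]
      rw [Finset.sum_congr rfl e1]
      have e0 : c (p' n, p' (n + 1)) = c (z, x) := by
        have h1 : n ≠ n + 1 := by omega
        simp [p', h1, hlast]
      rw [e0]
    have := csInf_le (hbd _ _ _) hmem
    rw [hsum] at this; linarith
  have := le_csInf (S_nonempty hn y z) key
  linarith

/-- Changing the first point of a chain. -/
lemma mod_first (m : ℕ) {η : ℝ} (hbd : ∀ n (x y : M), BddBelow (S c n x y)) (w w' y : M)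
    (hη : ∀ z, c (w, z) ≤ c (w', z) + η) :
    minChainCost c (m + 1) w y ≤ minChainCost c (m + 1) w' y + η := by
  classical
  rw [minChainCost_eq, minChainCost_eq]
  have key : ∀ r ∈ S c (m + 1) w' y, sInf (S c (m + 1) w y) - η ≤ r := by
    rintro r ⟨p, h0, hlast, rfl⟩
    set p' : ℕ → M := fun i => if i = 0 then w else p i with hp'
    have hmem : (∑ i ∈ Finset.range (m + 1), c (p' i, p' (i + 1))) ∈ S c (m + 1) w y :=
      ⟨p', if_pos rfl, by simp [p', hlast], rfl⟩
    have hsum : ∑ i ∈ Finset.range (m + 1), c (p' i, p' (i + 1))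
        ≤ (∑ i ∈ Finset.range (m + 1), c (p i, p (i + 1))) + η := by
      rw [Finset.sum_range_succ', Finset.sum_range_succ' (fun i => c (p i, p (i + 1)))]
      have e1 : ∀ i ∈ Finset.range m, c (p' (i + 1), p' (i + 1 + 1)) = c (p (i + 1), p (i + 1 + 1)) := by
        intro i _; simp [p']
      rw [Finset.sum_congr rfl e1]
      have e0 : c (p' 0, p' 1) ≤ c (p 0, p 1) + η := by
        have : c (p' 0, p' 1) = c (w, p 1) := by simp [p']
        rw [this, h0]; exact hη (p 1)
      linarith
    have := csInf_le (hbd _ _ _) hmem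
    linarith
  have := le_csInf (S_nonempty (by omega) w' y) key
  linarith

/-- Changing the last point of a chain. -/
lemma mod_last (m : ℕ) {η : ℝ} (hbd : ∀ n (x y : M), BddBelow (S c n x y)) (y w w' : M)
    (hη : ∀ z, c (z, w) ≤ c (z, w') + η) :
    minChainCost c (m + 1) y w ≤ minChainCost c (m + 1) y w' + η := by
  classical
  rw [minChainCost_eq, minChainCost_eq]
  have key : ∀ r ∈ S c (m + 1) y w', sInf (S c (m + 1) y w) - η ≤ r := by
    rintro r ⟨p, h0, hlast, rfl⟩
    set p' : ℕ → M := fun i => if i = m + 1 then w else p i with hp'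
    have hmem : (∑ i ∈ Finset.range (m + 1), c (p' i, p' (i + 1))) ∈ S c (m + 1) y w :=
      ⟨p', by simp [p', h0], if_pos rfl, rfl⟩
    have hsum : ∑ i ∈ Finset.range (m + 1), c (p' i, p' (i + 1))
        ≤ (∑ i ∈ Finset.range (m + 1), c (p i, p (i + 1))) + η := by
      rw [Finset.sum_range_succ, Finset.sum_range_succ (fun i => c (p i, p (i + 1)))]
      have e1 : ∀ i ∈ Finset.range m, c (p' i, p' (i + 1)) = c (p i, p (i + 1)) := by
        intro i hi
        have hi' := Finset.mem_range.mp hi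
        have h1 : i ≠ m + 1 := by omega
        have h2 : i + 1 ≠ m + 1 := by omega
        simp [p', h1, h2, show i ≠ m by omega]
      rw [Finset.sum_congr rfl e1]
      have e0 : c (p' m, p' (m + 1)) ≤ c (p m, p (m + 1)) + η := by
        have h1 : m ≠ m + 1 := by omega
        have : c (p' m, p' (m + 1)) = c (p m, w) := by simp [p', h1]
        rw [this, hlast]; exact hη (p m)
      linarith
    have := csInf_le (hbd _ _ _) hmem
    linarith
  have := le_csInf (S_nonempty (by omega) y w') key
  linarith

/-- The liminf comparison helper. -/
lemma liminf_helper {u w : ℕ → ℝ} {r : ℝ} (k : ℕ)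
    (hu_lb : ∃ b, ∀ᶠ n in atTop, b ≤ u n)
    (hw_lb : ∃ b, ∀ᶠ n in atTop, b ≤ w n)
    (hw_ub : ∃ b, ∀ᶠ n in atTop, w n ≤ b)
    (h : ∀ᶠ n in atTop, u (n + k) ≤ w n + r) :
    liminf u atTop ≤ liminf w atTop + r := by
  obtain ⟨bu, hbu⟩ := hu_lb
  obtain ⟨bl, hbl⟩ := hw_lb
  obtain ⟨bb, hbb⟩ := hw_ub
  have hbu' : ∀ᶠ n in atTop, bu ≤ u (n + k) :=
    (tendsto_add_atTop_nat k).eventually hbu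
  have hu_bdd : IsBoundedUnder (· ≥ ·) atTop (fun n => u (n + k)) :=
    ⟨bu, by simpa using hbu'⟩
  have hw_ub' : IsBoundedUnder (· ≤ ·) atTop w := ⟨bb, by simpa using hbb⟩
  have hw_lb' : IsBoundedUnder (· ≥ ·) atTop w := ⟨bl, by simpa using hbl⟩
  have hw_cb : IsCoboundedUnder (· ≥ ·) atTop w := hw_ub'.isCoboundedUnder_ge
  have hwr_cb : IsCoboundedUnder (· ≥ ·) atTop (fun n => w n + r) := by
    refine IsBoundedUnder.isCoboundedUnder_ge ⟨bb + r, ?_⟩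
    simpa using hbb.mono fun n hn => add_le_add_right hn r
  calc liminf u atTop = liminf (fun n => u (n + k)) atTop := (liminf_nat_add u k).symm
    _ ≤ liminf (fun n => w n + r) atTop := liminf_le_liminf h hu_bdd hwr_cb
    _ = liminf w atTop + r := liminf_add_const atTop w r hw_cb hw_lb'

lemma ub_lemma {v : M → ℝ} {K V : ℝ}
    (hbd : ∀ n (x y : M), BddBelow (S c n x y))
    (hcal : ∀ x : M, ∃ z, v x = v z + c (z, x))
    (hK : ∀ p, c p ≤ K) (hV : ∀ x, |v x| ≤ V) (x y : M) (n : ℕ) :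
    minChainCost c (n + 1) x y ≤ K + 2 * V := by
  classical
  let q : ℕ → M := fun k => Nat.rec y (fun _ prev => Classical.choose (hcal prev)) k
  have hq : ∀ k, v (q k) = v (q (k + 1)) + c (q (k + 1), q k) := fun k =>
    Classical.choose_spec (hcal (q k))
  have hq0 : q 0 = y := rfl
  set p : ℕ → M := fun i => if i = 0 then x else q (n + 1 - i) with hp
  have hlast : p (n + 1) = y := by
    show (if n + 1 = 0 then x else q (n + 1 - (n + 1))) = y
    rw [if_neg (Nat.succ_ne_zero n), Nat.sub_self, hq0]
  have hmem : (∑ i ∈ Finset.range (n + 1), c (p i, p (i + 1))) ∈ S c (n + 1) x y :=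
    ⟨p, if_pos rfl, hlast, rfl⟩
  have hsum : ∑ i ∈ Finset.range (n + 1), c (p i, p (i + 1))
      = c (x, q n) + (v y - v (q n)) := by
    rw [Finset.sum_range_succ']
    have e1 : ∀ i ∈ Finset.range n,
        c (p (i + 1), p (i + 1 + 1)) = v (q (n - (i + 1))) - v (q (n - i)) := by
      intro i hi
      have hi' := Finset.mem_range.mp hi
      have h1 : i + 1 ≠ 0 := by omega
      have h2 : i + 1 + 1 ≠ 0 := by omega
      obtain ⟨k, hk⟩ : ∃ k, n - (i + 1) = k := ⟨_, rfl⟩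
      have e2 : n + 1 - (i + 1) = k + 1 := by omega
      have e3 : n + 1 - (i + 1 + 1) = k := by omega
      have e5 : n - i = k + 1 := by omega
      simp only [p, if_neg h1, if_neg h2, e2, e3, hk, e5]
      have := hq k
      linarith
    rw [Finset.sum_congr rfl e1]
    have tele : ∑ i ∈ Finset.range n, (v (q (n - (i + 1))) - v (q (n - i)))
        = v (q (n - n)) - v (q (n - 0)) := Finset.sum_range_sub (fun i => v (q (n - i))) n
    rw [tele, Nat.sub_self, Nat.sub_zero, hq0]
    have e0 : c (p 0, p 1) = c (x, q n) := by
      have : p 1 = q n := by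
        show (if 1 = 0 then x else q (n + 1 - 1)) = q n
        rw [if_neg one_ne_zero, Nat.add_sub_cancel]
      rw [this]
      congr 1
    rw [e0]; ring
  rw [minChainCost_eq]
  have h1 := csInf_le (hbd _ _ _) hmem
  rw [hsum] at h1
  have h2 := hK (x, q n)
  have h3 := abs_le.mp (hV y)
  have h4 := abs_le.mp (hV (q n))
  linarith

end PeierlsAux

open PeierlsAux in
theorem peierls_solution_subsolution_equibounded
    {M : Type*} [MetricSpace M] [CompactSpace M] [Nonempty M]
    (c : M × M → ℝ) (hc : Continuous c)
    (hcrit : ∃ v : C(M, ℝ), ∀ x : M, v x = ⨅ y : M, (v y + c (y, x))) :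
    (∀ y x : M, peierls c y x = ⨅ z : M, (peierls c y z + c (z, x))) ∧
    (∀ y : M, Continuous (fun x : M => -peierls c x y)) ∧
    (∀ y x : M, -peierls c x y ≤ ⨅ z : M, (-peierls c z y + c (z, x))) ∧
    (∃ C : ℝ, ∀ y x : M, |-peierls c x y| ≤ C) := by
  classical
  obtain ⟨v, hv⟩ := hcrit
  obtain ⟨pm, -, hpm⟩ := isCompact_univ.exists_isMaxOn Set.univ_nonempty
    (hc.abs.continuousOn (s := Set.univ))
  set K : ℝ := |c pm| with hKdef
  have hK : ∀ p : M × M, |c p| ≤ K := fun p => hpm (Set.mem_univ p)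
  have hKnn : 0 ≤ K := (abs_nonneg _).trans (hK (Classical.arbitrary _))
  set V : ℝ := ‖v‖ with hVdef
  have hVx : ∀ x : M, |v x| ≤ V := fun x => by
    simpa [Real.norm_eq_abs] using v.norm_coe_le_norm x
  have hVnn : 0 ≤ V := norm_nonneg v
  have hbdr : ∀ x : M, BddBelow (Set.range fun z : M => v z + c (z, x)) := by
    intro x
    refine ⟨-V - K, ?_⟩
    rintro r ⟨z, rfl⟩
    have h1 := abs_le.mp (hVx z)
    have h2 := abs_le.mp (hK (z, x))
    dsimp only
    linarith
  have hsub : ∀ z x : M, v x ≤ v z + c (z, x) := fun z x => by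
    rw [hv x]; exact ciInf_le (hbdr x) z
  have hcal : ∀ x : M, ∃ z : M, v x = v z + c (z, x) := by
    intro x
    obtain ⟨z, -, hz⟩ := isCompact_univ.exists_isMinOn Set.univ_nonempty
      ((v.continuous.add (hc.comp (continuous_id.prodMk continuous_const))).continuousOn)
    refine ⟨z, le_antisymm (hsub z x) ?_⟩
    rw [hv x]
    exact le_ciInf fun w => hz (Set.mem_univ w)
  have hlbS := PeierlsAux.S_lb (c := c) (v := fun x => v x) hsub
  have hbdS : ∀ n (x y : M), BddBelow (PeierlsAux.S c n x y) :=
    fun n x y => ⟨v y - v x, hlbS n x y⟩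
  have hlow : ∀ (x y : M) (n : ℕ), 1 ≤ n → -(2 * V) ≤ minChainCost c n x y := by
    intro x y n hn
    rw [PeierlsAux.minChainCost_eq]
    refine le_csInf (PeierlsAux.S_nonempty hn x y) fun r hr => ?_
    have h0 := hlbS n x y r hr
    have h1 := abs_le.mp (hVx x)
    have h2 := abs_le.mp (hVx y)
    linarith
  have hup : ∀ (x y : M) (n : ℕ), 1 ≤ n → minChainCost c n x y ≤ K + 2 * V := by
    intro x y n hn
    obtain ⟨m, rfl⟩ : ∃ m, n = m + 1 := ⟨n - 1, by omega⟩
    exact PeierlsAux.ub_lemma hbdS hcal (fun p => (abs_le.mp (hK p)).2) hVx x y m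
  have hEvLow : ∀ x y : M, ∀ᶠ n in atTop, -(2 * V) ≤ minChainCost c n x y := fun x y =>
    eventually_atTop.mpr ⟨1, fun n hn => hlow x y n hn⟩
  have hEvUp : ∀ x y : M, ∀ᶠ n in atTop, minChainCost c n x y ≤ K + 2 * V := fun x y =>
    eventually_atTop.mpr ⟨1, fun n hn => hup x y n hn⟩
  have hBdd : ∀ x y : M, IsBoundedUnder (· ≥ ·) atTop (fun n => minChainCost c n x y) :=
    fun x y => ⟨-(2 * V), by simpa using hEvLow x y⟩
  have hCob : ∀ x y : M, IsCoboundedUnder (· ≥ ·) atTop (fun n => minChainCost c n x y) :=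
    fun x y => IsBoundedUnder.isCoboundedUnder_ge ⟨K + 2 * V, by simpa using hEvUp x y⟩
  have hPlow : ∀ x y : M, -(2 * V) ≤ peierls c x y := fun x y =>
    le_liminf_of_le (hCob x y) (hEvLow x y)
  have hPup : ∀ x y : M, peierls c x y ≤ K + 2 * V := fun x y =>
    liminf_le_of_frequently_le (hEvUp x y).frequently (hBdd x y)
  have hUC : ∀ ε : ℝ, 0 < ε → ∃ δ : ℝ, 0 < δ ∧
      ∀ a b : M × M, dist a b < δ → |c a - c b| < ε := by
    have huc := CompactSpace.uniformContinuous_of_continuous hc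
    rw [Metric.uniformContinuous_iff] at huc
    intro ε hε
    obtain ⟨δ, hδ1, hδ2⟩ := huc ε hε
    exact ⟨δ, hδ1, fun a b h => by simpa [Real.dist_eq] using hδ2 h⟩
  have partA : ∀ y x : M, peierls c y x = ⨅ z : M, (peierls c y z + c (z, x)) := by
    intro y x
    have hbdd_inf : BddBelow (Set.range fun z : M => peierls c y z + c (z, x)) := by
      refine ⟨-(2 * V) + -K, ?_⟩
      rintro r ⟨z, rfl⟩
      have h1 := hPlow y z
      have h2 := (abs_le.mp (hK (z, x))).1
      dsimp only
      linarith
    refine le_antisymm (le_ciInf fun z => ?_) ?_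
    · refine PeierlsAux.liminf_helper 1 ⟨_, hEvLow y x⟩ ⟨_, hEvLow y z⟩ ⟨_, hEvUp y z⟩ ?_
      filter_upwards [eventually_ge_atTop 1] with n hn
      exact PeierlsAux.append_le hbdS hn y z x
    · refine le_of_forall_pos_le_add fun ε hε => ?_
      obtain ⟨δ, hδpos, hδ⟩ := hUC (ε / 4) (by linarith)
      have hfreq : ∃ᶠ n in atTop, minChainCost c n y x < peierls c y x + ε / 4 := by
        apply frequently_lt_of_liminf_lt (hCob y x)
        show peierls c y x < peierls c y x + ε / 4
        linarith
      rw [frequently_atTop] at hfreq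
      have hex : ∀ j : ℕ, ∃ (m : ℕ) (zz : M), j + 1 ≤ m ∧
          minChainCost c m y zz + c (zz, x) < peierls c y x + ε / 4 := by
        intro j
        obtain ⟨n, hn, hlt⟩ := hfreq (j + 2)
        obtain ⟨m, rfl⟩ : ∃ m, n = m + 1 := ⟨n - 1, by omega⟩
        rw [PeierlsAux.minChainCost_eq] at hlt
        obtain ⟨r, hrS, hr⟩ := exists_lt_of_csInf_lt
          (PeierlsAux.S_nonempty (by omega) y x) hlt
        obtain ⟨p, h0, hlastp, rfl⟩ := hrS
        refine ⟨m, p m, by omega, ?_⟩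
        have hsplit : ∑ i ∈ Finset.range (m + 1), c (p i, p (i + 1))
            = (∑ i ∈ Finset.range m, c (p i, p (i + 1))) + c (p m, x) := by
          rw [Finset.sum_range_succ, hlastp]
        have hmem : (∑ i ∈ Finset.range m, c (p i, p (i + 1))) ∈ PeierlsAux.S c m y (p m) :=
          ⟨p, h0, rfl, rfl⟩
        have hle := csInf_le (hbdS m y (p m)) hmem
        rw [PeierlsAux.minChainCost_eq]
        rw [hsplit] at hr
        linarith
      choose mm zz hmm hkey using hex
      obtain ⟨zl, -, φ, hφ, hconv⟩ := isCompact_univ.tendsto_subseq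
        (fun j => Set.mem_univ (zz j))
      obtain ⟨J, hJ⟩ := Metric.tendsto_atTop.mp hconv δ hδpos
      have hfreq2 : ∃ᶠ n in atTop,
          minChainCost c n y zl ≤ peierls c y x + 3 * (ε / 4) - c (zl, x) := by
        rw [frequently_atTop]
        intro a
        set j := max a J with hj
        have hφj : j ≤ φ j := hφ.le_apply
        have hmmj := hmm (φ j)
        refine ⟨mm (φ j), by have := le_max_left a J; omega, ?_⟩
        have hdist : dist (zz (φ j)) zl < δ := hJ j (le_max_right a J)
        obtain ⟨m', hm'⟩ : ∃ m', mm (φ j) = m' + 1 := ⟨mm (φ j) - 1, by omega⟩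
        have hη1 : ∀ w : M, c (w, zl) ≤ c (w, zz (φ j)) + ε / 4 := by
          intro w
          have hd : dist ((w, zl) : M × M) (w, zz (φ j)) < δ := by
            rw [Prod.dist_eq]
            simp only [dist_self]
            exact max_lt hδpos (by rwa [dist_comm])
          linarith [(abs_lt.mp (hδ _ _ hd)).2]
        have hη2 : c (zl, x) ≤ c (zz (φ j), x) + ε / 4 := by
          have hd : dist ((zl, x) : M × M) (zz (φ j), x) < δ := by
            rw [Prod.dist_eq]
            simp only [dist_self]
            exact max_lt (by rwa [dist_comm]) hδpos
          linarith [(abs_lt.mp (hδ _ _ hd)).2]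
        have hmod : minChainCost c (mm (φ j)) y zl
            ≤ minChainCost c (mm (φ j)) y (zz (φ j)) + ε / 4 := by
          rw [hm']
          exact PeierlsAux.mod_last m' hbdS y zl (zz (φ j)) hη1
        have hk := hkey (φ j)
        linarith
      have hfin : peierls c y zl ≤ peierls c y x + 3 * (ε / 4) - c (zl, x) :=
        liminf_le_of_frequently_le hfreq2 (hBdd y zl)
      calc ⨅ z : M, (peierls c y z + c (z, x)) ≤ peierls c y zl + c (zl, x) :=
            ciInf_le hbdd_inf zl
        _ ≤ peierls c y x + ε := by linarith
  have hContFirst : ∀ y : M, Continuous fun x : M => peierls c x y := by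
    intro y
    rw [Metric.continuous_iff]
    intro b ε hε
    obtain ⟨δ, hδpos, hδ⟩ := hUC (ε / 2) (by linarith)
    have key : ∀ w w' : M, dist w w' < δ → peierls c w y ≤ peierls c w' y + ε / 2 := by
      intro w w' hww
      refine PeierlsAux.liminf_helper 0 ⟨_, hEvLow w y⟩ ⟨_, hEvLow w' y⟩ ⟨_, hEvUp w' y⟩ ?_
      filter_upwards [eventually_ge_atTop 1] with n hn
      obtain ⟨m, rfl⟩ : ∃ m, n = m + 1 := ⟨n - 1, by omega⟩
      have hη : ∀ z : M, c (w, z) ≤ c (w', z) + ε / 2 := by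
        intro z
        have hd : dist ((w, z) : M × M) (w', z) < δ := by
          rw [Prod.dist_eq]
          simp only [dist_self]
          exact max_lt hww hδpos
        linarith [(abs_lt.mp (hδ _ _ hd)).2]
      simpa using PeierlsAux.mod_first m hbdS w w' y hη
    refine ⟨δ, hδpos, fun a hab => ?_⟩
    have h1 := key a b hab
    have h2 := key b a (by rwa [dist_comm])
    rw [Real.dist_eq, abs_lt]
    constructor <;> linarith
  have partC : ∀ y x : M, -peierls c x y ≤ ⨅ z : M, (-peierls c z y + c (z, x)) := by
    intro y x
    refine le_ciInf fun z => ?_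
    have hkey : peierls c z y ≤ peierls c x y + c (z, x) := by
      refine PeierlsAux.liminf_helper 1 ⟨_, hEvLow z y⟩ ⟨_, hEvLow x y⟩ ⟨_, hEvUp x y⟩ ?_
      filter_upwards [eventually_ge_atTop 1] with n hn
      have := PeierlsAux.prepend_le hbdS hn z x y
      linarith
    linarith
  refine ⟨partA, fun y => (hContFirst y).neg, partC, ⟨K + 2 * V, fun y x => ?_⟩⟩
  rw [abs_le]
  constructor
  · have := hPup x y; linarith
  · have := hPlow x y; linarith
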